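/- arXiv:2007.00096 — 2 statements merged into one kernel-verified Lean document; each statement's English description precedes it below -/
import Mathlib

section
/- For each integer N ≥ 3, let ν^N = (ν^N_1,…,ν^N_N) be ℕ-valued random variables on a probability space with ∑_{i=1}^N ν^N_i = N almost surely, and let G_N be a sub-σ-algebra of the underlying σ-algebra. Suppose there is a deterministic sequence (b_N) with b_N → 0 such that for every N, almost surely (1/(N(N−1)(N−2))) ∑_{i=1}^N E[(ν^N_i)_3 | G_N] ≤ b_N · (1/(N(N−1))) ∑_{i=1}^N E[(ν^N_i)_2 | G_N]. Then E[c_N] = (1/(N(N−1))) ∑_{i=1}^N E[(ν^N_i)_2] → 0 as N → ∞. -/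
open MeasureTheory Finset Filter

lemma nn2 (n : ℕ) : 0 ≤ (n:ℝ) * ((n:ℝ) - 1) := by
  rcases Nat.eq_zero_or_pos n with h | h
  · simp [h]
  · have : (1:ℝ) ≤ n := by exact_mod_cast h
    nlinarith

lemma nn3 (n : ℕ) : 0 ≤ (n:ℝ) * ((n:ℝ) - 1) * ((n:ℝ) - 2) := by
  match n with
  | 0 => norm_num
  | 1 => norm_num
  | 2 => norm_num
  | (m+3) =>
    have h : (0:ℝ) ≤ m := Nat.cast_nonneg m
    push_cast
    nlinarith [mul_nonneg (mul_nonneg (by linarith : (0:ℝ) ≤ (m:ℝ)+3)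
      (by linarith : (0:ℝ) ≤ (m:ℝ)+2)) (by linarith : (0:ℝ) ≤ (m:ℝ)+1)]

lemma key_ff (K n : ℕ) (hK : 1 ≤ K) :
    (K:ℝ) * ((n:ℝ)*((n:ℝ)-1)) ≤ (n:ℝ)*((n:ℝ)-1)*((n:ℝ)-2) + (K:ℝ)*((K:ℝ)+1)*(n:ℝ) := by
  have hK' : (1:ℝ) ≤ K := by exact_mod_cast hK
  have hn : (0:ℝ) ≤ n := Nat.cast_nonneg n
  rcases le_or_gt n (K+1) with h | h
  · have h' : (n:ℝ) ≤ (K:ℝ)+1 := by exact_mod_cast h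
    nlinarith [nn3 n, mul_nonneg (mul_nonneg (by linarith : (0:ℝ) ≤ (K:ℝ)) hn)
      (by linarith : (0:ℝ) ≤ (K:ℝ)+2-(n:ℝ))]
  · have h' : (K:ℝ)+2 ≤ (n:ℝ) := by exact_mod_cast h
    nlinarith [mul_nonneg (nn2 n) (by linarith : (0:ℝ) ≤ (n:ℝ)-2-(K:ℝ)),
      mul_nonneg (mul_nonneg (by linarith : (0:ℝ) ≤ (K:ℝ)) (by linarith : (0:ℝ) ≤ (K:ℝ)+1)) hn]

/-- **Lemma 2 of the paper.** If the conditional third falling factorial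
moments are dominated by `b_N` times the conditional second falling factorial moments,
with `b_N → 0`, then the expected pair merger rate `E[c_N] → 0` as `N → ∞`. -/
theorem expected_cN_tendsto_zero
    (Ω : ℕ → Type*) (mΩ : ∀ N, MeasurableSpace (Ω N))
    (P : ∀ N, Measure (Ω N)) (hP : ∀ N, IsProbabilityMeasure (P N))
    (ν : ∀ N, Fin N → Ω N → ℕ) (hmeas : ∀ N i, Measurable (ν N i))
    (G : ∀ N, MeasurableSpace (Ω N)) (hG : ∀ N, G N ≤ mΩ N)
    (hsum : ∀ N : ℕ, 3 ≤ N → ∀ᵐ ω ∂(P N), ∑ i, ν N i ω = N)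
    (b : ℕ → ℝ) (hb : Tendsto b atTop (nhds 0))
    (hmom : ∀ N : ℕ, 3 ≤ N → ∀ᵐ ω ∂(P N),
      (1 / ((N : ℝ) * (N - 1) * (N - 2))) *
          ∑ i, condExp (G N) (P N)
            (fun ω' => (ν N i ω' : ℝ) * ((ν N i ω' : ℝ) - 1) * ((ν N i ω' : ℝ) - 2)) ω ≤
        b N * ((1 / ((N : ℝ) * (N - 1))) *
          ∑ i, condExp (G N) (P N)
            (fun ω' => (ν N i ω' : ℝ) * ((ν N i ω' : ℝ) - 1)) ω)) :
    Tendsto (fun N : ℕ =>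
        (1 / ((N : ℝ) * (N - 1))) *
          ∑ i, ∫ ω, (ν N i ω : ℝ) * ((ν N i ω : ℝ) - 1) ∂(P N))
      atTop (nhds 0) := by
  -- lower bound: the quantity is always nonnegative
  have hlow : ∀ N : ℕ, 0 ≤ (1 / ((N : ℝ) * (N - 1))) *
      ∑ i, ∫ ω, (ν N i ω : ℝ) * ((ν N i ω : ℝ) - 1) ∂(P N) := by
    intro N
    apply mul_nonneg (one_div_nonneg.2 (nn2 N))
    exact Finset.sum_nonneg fun i _ => integral_nonneg fun ω => nn2 _
  -- main estimate
  have main : ∀ N : ℕ, 3 ≤ N → (1 / ((N : ℝ) * (N - 1))) *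
      ∑ i, ∫ ω, (ν N i ω : ℝ) * ((ν N i ω : ℝ) - 1) ∂(P N) ≤
      4 * |b N| + 6 / ((N:ℝ) - 1) := by
    intro N hN
    haveI := hP N
    have hN3 : (3:ℝ) ≤ (N:ℝ) := by exact_mod_cast hN
    have h0N : (0:ℝ) < N := by linarith
    have h1N : (0:ℝ) < (N:ℝ)-1 := by linarith
    have h2N : (0:ℝ) < (N:ℝ)-2 := by linarith
    have hy : (0:ℝ) < (N:ℝ)*((N:ℝ)-1) := mul_pos h0N h1N
    have hx : (0:ℝ) < (N:ℝ)*((N:ℝ)-1)*((N:ℝ)-2) := mul_pos hy h2N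
    -- a.e. bound on ν
    have hνle : ∀ᵐ ω ∂(P N), ∀ i, (ν N i ω : ℝ) ≤ N := by
      filter_upwards [hsum N hN] with ω hω i
      have h1 : ν N i ω ≤ N := by
        calc ν N i ω ≤ ∑ j, ν N j ω :=
              Finset.single_le_sum (f := fun j => ν N j ω) (fun _ _ => Nat.zero_le _)
                (Finset.mem_univ i)
          _ = N := hω
      exact_mod_cast h1
    -- integrability
    have hb2 : ∀ i : Fin N,
        Integrable (fun ω => (ν N i ω : ℝ) * ((ν N i ω : ℝ) - 1)) (P N) := by
      intro i
      have hm : AEStronglyMeasurable[mΩ N] (fun ω => (ν N i ω : ℝ) * ((ν N i ω : ℝ) - 1)) (P N) :=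
        (((measurable_from_top (f := fun n : ℕ => (n:ℝ)*((n:ℝ)-1))).comp
          (hmeas N i))).aestronglyMeasurable
      refine (integrable_const ((N:ℝ)^2)).mono' hm ?_
      filter_upwards [hνle] with ω hω
      have hle := hω i
      have hn : (0:ℝ) ≤ ν N i ω := Nat.cast_nonneg _
      rw [Real.norm_eq_abs, abs_of_nonneg (nn2 _)]
      nlinarith
    have hb3 : ∀ i : Fin N,
        Integrable (fun ω => (ν N i ω : ℝ) * ((ν N i ω : ℝ) - 1) * ((ν N i ω : ℝ) - 2)) (P N) := by
      intro i
      have hm : AEStronglyMeasurable[mΩ N]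
          (fun ω => (ν N i ω : ℝ) * ((ν N i ω : ℝ) - 1) * ((ν N i ω : ℝ) - 2)) (P N) :=
        (((measurable_from_top (f := fun n : ℕ => (n:ℝ)*((n:ℝ)-1)*((n:ℝ)-2))).comp
          (hmeas N i))).aestronglyMeasurable
      refine (integrable_const ((N:ℝ)^3)).mono' hm ?_
      filter_upwards [hνle] with ω hω
      have hle := hω i
      have hn : (0:ℝ) ≤ ν N i ω := Nat.cast_nonneg _
      rw [Real.norm_eq_abs, abs_of_nonneg (nn3 _)]
      rcases le_or_gt (ν N i ω) 2 with hc | hc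
      · have : ν N i ω = 0 ∨ ν N i ω = 1 ∨ ν N i ω = 2 := by omega
        have hNc : (0:ℝ) ≤ (N:ℝ)^3 := by positivity
        rcases this with h | h | h <;> rw [h] <;> norm_num <;> linarith
      · have h3n : (3:ℝ) ≤ (ν N i ω : ℝ) := by exact_mod_cast hc
        have hprod : (ν N i ω : ℝ) * ((ν N i ω : ℝ) - 1) * ((ν N i ω : ℝ) - 2) ≤
            (N:ℝ) * (N:ℝ) * (N:ℝ) :=
          mul_le_mul (mul_le_mul hle (by linarith) (by linarith) h0N.le)
            (by linarith) (by linarith) (by positivity)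
        calc (ν N i ω : ℝ) * ((ν N i ω : ℝ) - 1) * ((ν N i ω : ℝ) - 2)
            ≤ (N:ℝ) * (N:ℝ) * (N:ℝ) := hprod
          _ = (N:ℝ)^3 := by ring
    have hA0 : 0 ≤ ∑ i, ∫ ω, (ν N i ω : ℝ) * ((ν N i ω : ℝ) - 1) ∂(P N) :=
      Finset.sum_nonneg fun i _ => integral_nonneg fun ω => nn2 _
    -- step 3 : take the expectation of hmom
    have h3 : (1 / ((N : ℝ) * (N - 1) * (N - 2))) *
        ∑ i, ∫ ω, (ν N i ω : ℝ) * ((ν N i ω : ℝ) - 1) * ((ν N i ω : ℝ) - 2) ∂(P N) ≤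
        b N * ((1 / ((N : ℝ) * (N - 1))) *
          ∑ i, ∫ ω, (ν N i ω : ℝ) * ((ν N i ω : ℝ) - 1) ∂(P N)) := by
      have hL : Integrable (fun ω => (1 / ((N : ℝ) * (N - 1) * (N - 2))) *
          ∑ i, condExp (G N) (P N)
            (fun ω' => (ν N i ω' : ℝ) * ((ν N i ω' : ℝ) - 1) * ((ν N i ω' : ℝ) - 2)) ω) (P N) :=
        (integrable_finset_sum univ (fun i _ => integrable_condExp)).const_mul _
      have hR : Integrable (fun ω => b N * ((1 / ((N : ℝ) * (N - 1))) *
          ∑ i, condExp (G N) (P N)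
            (fun ω' => (ν N i ω' : ℝ) * ((ν N i ω' : ℝ) - 1)) ω)) (P N) :=
        ((integrable_finset_sum univ (fun i _ => integrable_condExp)).const_mul _).const_mul _
      have hint := integral_mono_ae hL hR (hmom N hN)
      simp only [integral_const_mul] at hint
      rw [integral_finset_sum univ (fun i _ => integrable_condExp),
        integral_finset_sum univ (fun i _ => integrable_condExp)] at hint
      calc (1 / ((N : ℝ) * (N - 1) * (N - 2))) *
            ∑ i, ∫ ω, (ν N i ω : ℝ) * ((ν N i ω : ℝ) - 1) * ((ν N i ω : ℝ) - 2) ∂(P N)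
          = (1 / ((N : ℝ) * (N - 1) * (N - 2))) *
            ∑ i, ∫ ω, condExp (G N) (P N)
              (fun ω' => (ν N i ω' : ℝ) * ((ν N i ω' : ℝ) - 1) * ((ν N i ω' : ℝ) - 2)) ω ∂(P N) := by
            congr 1
            exact Finset.sum_congr rfl fun i _ => (integral_condExp (hG N)).symm
        _ ≤ b N * ((1 / ((N : ℝ) * (N - 1))) *
            ∑ i, ∫ ω, condExp (G N) (P N)
              (fun ω' => (ν N i ω' : ℝ) * ((ν N i ω' : ℝ) - 1)) ω ∂(P N)) := hint
        _ = b N * ((1 / ((N : ℝ) * (N - 1))) *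
            ∑ i, ∫ ω, (ν N i ω : ℝ) * ((ν N i ω : ℝ) - 1) ∂(P N)) := by
            congr 2
            exact Finset.sum_congr rfl fun i _ => integral_condExp (hG N)
    -- the choice of K
    set K : ℕ := ⌈2 * |b N| * ((N:ℝ)-2)⌉₊ + 1 with hKdef
    have hK1 : 1 ≤ K := Nat.le_add_left 1 _
    have hK1r : (1:ℝ) ≤ K := by exact_mod_cast hK1
    have hKge : 2*|b N| * ((N:ℝ)-2) ≤ (K:ℝ) := by
      have := Nat.le_ceil (2*|b N| * ((N:ℝ)-2))
      rw [hKdef]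
      push_cast
      linarith
    have hKle : (K:ℝ) ≤ 2*|b N| * ((N:ℝ)-2) + 2 := by
      have h0 : (0:ℝ) ≤ 2*|b N| * ((N:ℝ)-2) := by positivity
      have := Nat.ceil_lt_add_one h0
      rw [hKdef]
      push_cast
      linarith
    -- step 4 : pointwise combinatorial bound, integrated
    have hpt : ∀ᵐ ω ∂(P N), (K:ℝ) * ∑ i, (ν N i ω : ℝ) * ((ν N i ω : ℝ) - 1) ≤
        (∑ i, (ν N i ω : ℝ) * ((ν N i ω : ℝ) - 1) * ((ν N i ω : ℝ) - 2)) +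
          (K:ℝ)*((K:ℝ)+1)*(N:ℝ) := by
      filter_upwards [hsum N hN] with ω hω
      have hsum' : ∑ i, (ν N i ω : ℝ) = (N:ℝ) := by exact_mod_cast hω
      calc (K:ℝ) * ∑ i, (ν N i ω : ℝ) * ((ν N i ω : ℝ) - 1)
          = ∑ i, (K:ℝ) * ((ν N i ω : ℝ) * ((ν N i ω : ℝ) - 1)) := by rw [Finset.mul_sum]
        _ ≤ ∑ i, ((ν N i ω : ℝ) * ((ν N i ω : ℝ) - 1) * ((ν N i ω : ℝ) - 2) +
              (K:ℝ)*((K:ℝ)+1)*(ν N i ω : ℝ)) :=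
            Finset.sum_le_sum fun i _ => key_ff K _ hK1
        _ = (∑ i, (ν N i ω : ℝ) * ((ν N i ω : ℝ) - 1) * ((ν N i ω : ℝ) - 2)) +
              (K:ℝ)*((K:ℝ)+1) * ∑ i, (ν N i ω : ℝ) := by
            rw [Finset.sum_add_distrib, ← Finset.mul_sum]
        _ = _ := by rw [hsum']
    have h4 : (K:ℝ) * ∑ i, ∫ ω, (ν N i ω : ℝ) * ((ν N i ω : ℝ) - 1) ∂(P N) ≤
        (∑ i, ∫ ω, (ν N i ω : ℝ) * ((ν N i ω : ℝ) - 1) * ((ν N i ω : ℝ) - 2) ∂(P N)) +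
          (K:ℝ)*((K:ℝ)+1)*(N:ℝ) := by
      have hiL : Integrable (fun ω => (K:ℝ) * ∑ i, (ν N i ω : ℝ) * ((ν N i ω : ℝ) - 1)) (P N) :=
        (integrable_finset_sum univ (fun i _ => hb2 i)).const_mul _
      have hiR : Integrable (fun ω =>
          (∑ i, (ν N i ω : ℝ) * ((ν N i ω : ℝ) - 1) * ((ν N i ω : ℝ) - 2)) +
            (K:ℝ)*((K:ℝ)+1)*(N:ℝ)) (P N) :=
        (integrable_finset_sum univ (fun i _ => hb3 i)).add (integrable_const _)
      have hint := integral_mono_ae hiL hiR hpt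
      rw [integral_const_mul, integral_finset_sum univ (fun i _ => hb2 i),
        integral_add (integrable_finset_sum univ (fun i _ => hb3 i)) (integrable_const _),
        integral_finset_sum univ (fun i _ => hb3 i), integral_const] at hint
      simpa using hint
    -- combine
    have hBle : (∑ i, ∫ ω, (ν N i ω : ℝ) * ((ν N i ω : ℝ) - 1) * ((ν N i ω : ℝ) - 2) ∂(P N)) ≤
        |b N| * ((N:ℝ)-2) * ∑ i, ∫ ω, (ν N i ω : ℝ) * ((ν N i ω : ℝ) - 1) ∂(P N) := by
      rw [one_div, inv_mul_le_iff₀ hx] at h3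
      calc (∑ i, ∫ ω, (ν N i ω : ℝ) * ((ν N i ω : ℝ) - 1) * ((ν N i ω : ℝ) - 2) ∂(P N))
          ≤ (N:ℝ)*((N:ℝ)-1)*((N:ℝ)-2) * (b N * ((1 / ((N : ℝ) * (N - 1))) *
              ∑ i, ∫ ω, (ν N i ω : ℝ) * ((ν N i ω : ℝ) - 1) ∂(P N))) := h3
        _ = b N * ((N:ℝ)-2) * ∑ i, ∫ ω, (ν N i ω : ℝ) * ((ν N i ω : ℝ) - 1) ∂(P N) := by
            field_simp
        _ ≤ |b N| * ((N:ℝ)-2) * ∑ i, ∫ ω, (ν N i ω : ℝ) * ((ν N i ω : ℝ) - 1) ∂(P N) := by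
            apply mul_le_mul_of_nonneg_right _ hA0
            exact mul_le_mul_of_nonneg_right (le_abs_self _) h2N.le
    have hAle : (∑ i, ∫ ω, (ν N i ω : ℝ) * ((ν N i ω : ℝ) - 1) ∂(P N)) ≤ 2*((K:ℝ)+1)*(N:ℝ) := by
      nlinarith [mul_nonneg (by linarith : (0:ℝ) ≤ (K:ℝ) - 2*|b N| * ((N:ℝ)-2)) hA0]
    -- finish
    rw [one_div, inv_mul_le_iff₀ hy]
    have hexp : (N:ℝ)*((N:ℝ)-1) * (4*|b N| + 6/((N:ℝ)-1)) =
        4*|b N| * (N:ℝ)*((N:ℝ)-1) + 6*(N:ℝ) := by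
      field_simp
    rw [hexp]
    nlinarith [mul_le_mul_of_nonneg_right
        (show (K:ℝ)+1 ≤ 2*|b N| * ((N:ℝ)-2)+3 by linarith) (by linarith : (0:ℝ) ≤ 2*(N:ℝ)),
      mul_nonneg (abs_nonneg (b N)) h0N.le]
  -- upper bound tends to zero
  have hu : Tendsto (fun N : ℕ => 4 * |b N| + 6 / ((N:ℝ) - 1)) atTop (nhds 0) := by
    have h1 : Tendsto (fun N : ℕ => 4 * |b N|) atTop (nhds 0) := by
      have := (hb.abs).const_mul 4
      simpa using this
    have h2 : Tendsto (fun N : ℕ => 6 / ((N:ℝ) - 1)) atTop (nhds 0) := by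
      have ht : Tendsto (fun N : ℕ => (N:ℝ) - 1) atTop atTop :=
        tendsto_atTop_add_const_right atTop (-1) tendsto_natCast_atTop_atTop
      have := ht.inv_tendsto_atTop.const_mul 6
      simpa [div_eq_mul_inv] using this
    simpa using h1.add h2
  refine tendsto_of_tendsto_of_tendsto_of_le_of_le' tendsto_const_nhds hu ?_ ?_
  · exact Eventually.of_forall hlow
  · filter_upwards [eventually_ge_atTop 3] with N hN
    exact main N hN
end

section
/- For every integer m ≥ 2 there exist constants B_m > 0 and C_m > 0, depending only on m, such that for every integer N ≥ m and every ν = (ν_1,…,ν_N) ∈ ℕ^N with ∑_{i=1}^N ν_i = N: (1/((N)_m)) ∑_{k=1}^{m−1} ∑_{b_1 ≥ ⋯ ≥ b_k ≥ 1, b_1+⋯+b_k = m} [ m! / ∏_{j=1}^m ((j!)^{κ_j} κ_j!) ] · ∑_{distinct (i_1,…,i_k)} ∏_{l=1}^k (ν_{i_l})_{b_l} ≤ C(m,2)·(1 + C_m/N)·c_N + B_m·(1 + C_m/N)·D_N, where κ_j = |{l : b_l = j}|, the inner sum is over tuples of pairwise distinct indices in {1,…,N}, and C(m,2) = m(m−1)/2.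 -/
open Finset

/-- The real falling factorial `(x)_b = x (x-1) ⋯ (x-b+1)`. -/
noncomputable def fallingFact (x : ℝ) (b : ℕ) : ℝ := ∏ j ∈ Finset.range b, (x - j)



lemma ffCast (n b : ℕ) : fallingFact (n : ℝ) b = (n.descFactorial b : ℝ) := by
  induction b with
  | zero => simp [fallingFact]
  | succ b ih =>
    rw [fallingFact, Finset.prod_range_succ, ← fallingFact, ih, Nat.descFactorial_succ]
    rcases lt_or_ge b n with h | h
    · push_cast [Nat.cast_sub h.le]; ring
    · rw [Nat.sub_eq_zero_of_le h, zero_mul, Nat.cast_zero]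
      rcases eq_or_lt_of_le h with h' | h'
      · subst h'; simp
      · rw [Nat.descFactorial_eq_zero_iff_lt.2 h']; simp

lemma desc_le_mul_pow {ν N b : ℕ} (hb : 1 ≤ b) (hν : ν ≤ N) :
    ν.descFactorial b ≤ ν * N ^ (b - 1) := by
  obtain ⟨b', rfl⟩ := Nat.exists_eq_add_of_le hb
  calc ν.descFactorial (1 + b') ≤ ν ^ (1 + b') := Nat.descFactorial_le_pow _ _
    _ = ν * ν ^ b' := by rw [pow_add, pow_one]
    _ ≤ ν * N ^ b' := by gcongr
    _ = ν * N ^ (1 + b' - 1) := by simp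

lemma desc_le_pair {ν N b : ℕ} (hb : 2 ≤ b) (hν : ν ≤ N) :
    ν.descFactorial b ≤ ν * (ν - 1) * N ^ (b - 2) := by
  obtain ⟨b', rfl⟩ := Nat.exists_eq_add_of_le hb
  rw [show 2 + b' - 2 = b' by omega]
  match ν, hν with
  | 0, _ =>
    have : (0:ℕ).descFactorial (2 + b') = 0 :=
      Nat.descFactorial_eq_zero_iff_lt.2 (by omega)
    simp [this]
  | 1, _ =>
    have : (1:ℕ).descFactorial (2 + b') = 0 :=
      Nat.descFactorial_eq_zero_iff_lt.2 (by omega)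
    simp [this]
  | (v+2), hν =>
    rw [show 2 + b' = (b' + 1) + 1 by omega, Nat.succ_descFactorial_succ,
      Nat.succ_descFactorial_succ, show v + 2 - 1 = v + 1 by omega]
    have h3 : v.descFactorial b' ≤ N ^ b' :=
      le_trans (Nat.descFactorial_le_pow _ _) (Nat.pow_le_pow_left (by omega) _)
    calc (v+2) * ((v+1) * v.descFactorial b') = (v+2) * (v+1) * v.descFactorial b' := by ring
      _ ≤ (v+2) * (v+1) * N ^ b' := by gcongr

lemma desc_le_triple {ν N b : ℕ} (hb : 3 ≤ b) (hν : ν ≤ N) :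
    ν.descFactorial b ≤ ν * (ν - 1) * ν * N ^ (b - 3) := by
  obtain ⟨b', rfl⟩ := Nat.exists_eq_add_of_le hb
  rw [show 3 + b' - 3 = b' by omega]
  match ν, hν with
  | 0, _ =>
    have : (0:ℕ).descFactorial (3 + b') = 0 :=
      Nat.descFactorial_eq_zero_iff_lt.2 (by omega)
    simp [this]
  | 1, _ =>
    have : (1:ℕ).descFactorial (3 + b') = 0 :=
      Nat.descFactorial_eq_zero_iff_lt.2 (by omega)
    simp [this]
  | (v+2), hν =>
    rw [show 3 + b' = (b' + 2) + 1 by omega, Nat.succ_descFactorial_succ,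
      show b' + 2 = (b' + 1) + 1 by rfl, Nat.succ_descFactorial_succ,
      show v + 2 - 1 = v + 1 by omega]
    have h3 : v.descFactorial (b' + 1) ≤ v * N ^ b' := by
      have := desc_le_mul_pow (ν := v) (N := N) (b := b' + 1) (by omega) (by omega)
      simpa using this
    calc (v+2) * ((v+1) * v.descFactorial (b'+1)) ≤ (v+2) * ((v+1) * (v * N ^ b')) := by gcongr
      _ ≤ (v+2) * ((v+1) * ((v+2) * N ^ b')) := by gcongr; omega
      _ = (v+2) * (v+1) * (v+2) * N ^ b' := by ring


lemma one_le_prod_aux {ι : Type*} (s : Finset ι) (f : ι → ℝ) (h : ∀ j ∈ s, 1 ≤ f j) :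
    (1:ℝ) ≤ ∏ j ∈ s, f j := by
  calc (1:ℝ) = ∏ _j ∈ s, (1:ℝ) := by simp
    _ ≤ ∏ j ∈ s, f j := Finset.prod_le_prod (by intros; norm_num) h

lemma prod_one_add_le {ι : Type*} (s : Finset ι) (x : ι → ℝ) (hx : ∀ j ∈ s, 0 ≤ x j) :
    ∏ j ∈ s, (1 + x j) ≤ 1 + (∑ j ∈ s, x j) * ∏ j ∈ s, (1 + x j) := by
  classical
  induction s using Finset.induction_on with
  | empty => simp
  | @insert a s ha ih =>
    have hxa : 0 ≤ x a := hx a (mem_insert_self _ _)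
    have hx' : ∀ j ∈ s, 0 ≤ x j := fun j hj => hx j (mem_insert_of_mem hj)
    have hQ1 : (1:ℝ) ≤ ∏ j ∈ s, (1 + x j) :=
      one_le_prod_aux s _ (fun j hj => by linarith [hx' j hj])
    have hS0 : 0 ≤ ∑ j ∈ s, x j := Finset.sum_nonneg hx'
    rw [Finset.prod_insert ha, Finset.sum_insert ha]
    have ih' := ih hx'
    set Q := ∏ j ∈ s, (1 + x j)
    set S := ∑ j ∈ s, x j
    nlinarith [mul_nonneg (mul_nonneg hxa hS0) (by linarith : (0:ℝ) ≤ Q),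
      mul_nonneg (mul_nonneg hxa hxa) (by linarith : (0:ℝ) ≤ Q)]

lemma ratio_bounds {m N : ℕ} (hm : 2 ≤ m) (hN : m ≤ N) :
    (0 < ∏ j ∈ Ico 2 m, ((N:ℝ) - j)) ∧
    ((N:ℝ) ^ (m-2) ≤ (1 + (m:ℝ)^3 * ((m:ℝ)+1)^m / N) * ∏ j ∈ Ico 2 m, ((N:ℝ) - j)) ∧
    ((N:ℝ) ^ (m-2) ≤ ((m:ℝ)+1)^m * ∏ j ∈ Ico 2 m, ((N:ℝ) - j)) := by
  have hmN : (m:ℝ) ≤ N := by exact_mod_cast hN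
  have hm2 : (2:ℝ) ≤ m := by exact_mod_cast hm
  have hN0 : (0:ℝ) < N := by linarith
  have hfac : ∀ j ∈ Ico 2 m, 0 < (N:ℝ) - j := by
    intro j hj
    have hjm : j < m := (mem_Ico.1 hj).2
    have : (j:ℝ) < m := by exact_mod_cast hjm
    linarith
  have hP0 : 0 < ∏ j ∈ Ico 2 m, ((N:ℝ) - j) := Finset.prod_pos hfac
  set P := ∏ j ∈ Ico 2 m, ((N:ℝ) - j) with hPdef
  set x : ℕ → ℝ := fun j => (j:ℝ) * m / N with hxdef
  have hx0 : ∀ j ∈ Ico 2 m, 0 ≤ x j := fun j hj => by positivity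
  set Q := ∏ j ∈ Ico 2 m, (1 + x j) with hQdef
  have hQbd : Q ≤ ((m:ℝ)+1)^m := by
    have h1 : Q ≤ ((m:ℝ)+1)^(m-2) := by
      rw [hQdef]
      calc ∏ j ∈ Ico 2 m, (1 + x j) ≤ ∏ _j ∈ Ico 2 m, ((m:ℝ)+1) := by
            apply Finset.prod_le_prod
            · intro j hj; linarith [hx0 j hj]
            · intro j hj
              have hjm : j < m := (mem_Ico.1 hj).2
              have hjN : (j:ℝ) ≤ N := by
                have : (j:ℝ) < m := by exact_mod_cast hjm
                linarith
              have : x j ≤ m := by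
                rw [hxdef]
                simp only
                rw [div_le_iff₀ hN0]
                nlinarith
              linarith
        _ = ((m:ℝ)+1)^(m-2) := by rw [Finset.prod_const, Nat.card_Ico]
    have h2 : ((m:ℝ)+1)^(m-2) ≤ ((m:ℝ)+1)^m :=
      pow_le_pow_right₀ (by linarith) (by omega)
    linarith
  have hQ0 : 0 ≤ Q := Finset.prod_nonneg (fun j hj => by linarith [hx0 j hj])
  have hNQ : (N:ℝ) ^ (m-2) ≤ Q * P := by
    calc (N:ℝ) ^ (m-2) = ∏ _j ∈ Ico 2 m, (N:ℝ) := by rw [Finset.prod_const, Nat.card_Ico]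
      _ ≤ ∏ j ∈ Ico 2 m, (1 + x j) * ((N:ℝ) - j) := by
          apply Finset.prod_le_prod (fun j _ => le_of_lt hN0)
          intro j hj
          have hjm : j < m := (mem_Ico.1 hj).2
          have hjr : (j:ℝ) + 1 ≤ m := by exact_mod_cast hjm
          have hj0 : (0:ℝ) ≤ j := by positivity
          have key : (N:ℝ)^2 ≤ ((N:ℝ) + j*m) * ((N:ℝ) - j) := by
            nlinarith [mul_nonneg hj0 (mul_nonneg (by linarith : (0:ℝ) ≤ (m:ℝ)-1) (by linarith : (0:ℝ) ≤ (N:ℝ)-m)),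
              mul_nonneg hj0 (mul_nonneg (by linarith : (0:ℝ) ≤ (m:ℝ)) (by linarith : (0:ℝ) ≤ (m:ℝ)-1-j))]
          have hrw : (1 + x j) = ((N:ℝ) + j*m) / N := by rw [hxdef]; field_simp
          rw [hrw, div_mul_eq_mul_div, le_div_iff₀ hN0]
          nlinarith
      _ = Q * P := by rw [hQdef, hPdef, ← Finset.prod_mul_distrib]
  have hsum : ∑ j ∈ Ico 2 m, x j ≤ (m:ℝ)^3 / N := by
    have hcard : ((Ico 2 m).card : ℝ) ≤ m := by
      rw [Nat.card_Ico]
      exact_mod_cast Nat.sub_le m 2 |>.trans (le_refl m)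
    calc ∑ j ∈ Ico 2 m, x j ≤ ∑ _j ∈ Ico 2 m, (m:ℝ)*m/N := by
          apply Finset.sum_le_sum
          intro j hj
          have hjm : (j:ℝ) ≤ m := by exact_mod_cast (mem_Ico.1 hj).2.le
          rw [hxdef]
          simp only
          gcongr
      _ = ((Ico 2 m).card : ℝ) * ((m:ℝ)*m/N) := by rw [Finset.sum_const, nsmul_eq_mul]
      _ ≤ (m:ℝ) * ((m:ℝ)*m/N) := by
          apply mul_le_mul_of_nonneg_right hcard
          positivity
      _ = (m:ℝ)^3 / N := by ring
  have hQC : Q ≤ 1 + (m:ℝ)^3 * ((m:ℝ)+1)^m / N := by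
    have h := prod_one_add_le (Ico 2 m) x hx0
    rw [← hQdef] at h
    calc Q ≤ 1 + (∑ j ∈ Ico 2 m, x j) * Q := h
      _ ≤ 1 + ((m:ℝ)^3 / N) * ((m:ℝ)+1)^m := by
          have hs0 : 0 ≤ ∑ j ∈ Ico 2 m, x j := Finset.sum_nonneg hx0
          nlinarith
      _ = 1 + (m:ℝ)^3 * ((m:ℝ)+1)^m / N := by ring
  refine ⟨hP0, ?_, ?_⟩
  · calc (N:ℝ)^(m-2) ≤ Q * P := hNQ
      _ ≤ (1 + (m:ℝ)^3 * ((m:ℝ)+1)^m / N) * P := by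
          apply mul_le_mul_of_nonneg_right hQC (le_of_lt hP0)
  · calc (N:ℝ)^(m-2) ≤ Q * P := hNQ
      _ ≤ ((m:ℝ)+1)^m * P := mul_le_mul_of_nonneg_right hQbd (le_of_lt hP0)


lemma prod_bound_aux (m k : ℕ) (Nr : ℝ) (S : ℕ → ℝ) (W U T : ℝ)
    (hNr : 1 ≤ Nr) (hk1 : 1 ≤ k) (hk2 : k ≤ m - 2) (hm : 2 ≤ m)
    (hS0 : ∀ c, 0 ≤ S c)
    (hS2 : S 2 = W)
    (hSb1 : ∀ c, 1 ≤ c → S c ≤ Nr ^ c)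
    (hSbU : ∀ c, 3 ≤ c → S c ≤ U * Nr ^ (c - 3))
    (hUT : U ≤ T) (hT0 : 0 ≤ T) (hU0 : 0 ≤ U)
    (hWW : W * W ≤ Nr * T)
    (b : Fin k → ℕ) (hsort : ∀ l l' : Fin k, l ≤ l' → b l' ≤ b l)
    (hparts : ∀ l, 1 ≤ b l) (hbsum : ∑ l, b l = m) :
    ∏ l, S (b l) ≤ Nr ^ (m - 3) * T := by
  have hNr0 : (0:ℝ) ≤ Nr := by linarith
  set l0 : Fin k := ⟨0, by omega⟩ with hl0
  have hble : ∀ l, b l ≤ b l0 := fun l => hsort l0 l (by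
    rw [Fin.le_def]; exact Nat.zero_le _)
  have hb0m : b l0 ≤ m := hbsum ▸ Finset.single_le_sum (fun l _ => Nat.zero_le _) (mem_univ l0)
  -- sum over erase
  have hsplit0 : b l0 + ∑ l ∈ univ.erase l0, b l = m := by
    rw [Finset.add_sum_erase _ _ (mem_univ l0)]; exact hbsum
  rcases le_or_gt 3 (b l0) with h3 | h3
  · -- case largest part ≥ 3
    have hprod_erase : ∏ l ∈ univ.erase l0, S (b l) ≤ Nr ^ (m - b l0) := by
      calc ∏ l ∈ univ.erase l0, S (b l) ≤ ∏ l ∈ univ.erase l0, Nr ^ (b l) :=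
            Finset.prod_le_prod (fun l _ => hS0 _) (fun l _ => hSb1 _ (hparts l))
        _ = Nr ^ (∑ l ∈ univ.erase l0, b l) := Finset.prod_pow_eq_pow_sum _ _ _
        _ = Nr ^ (m - b l0) := by congr 1; omega
    calc ∏ l, S (b l) = S (b l0) * ∏ l ∈ univ.erase l0, S (b l) :=
          (Finset.mul_prod_erase _ _ (mem_univ l0)).symm
      _ ≤ (U * Nr ^ (b l0 - 3)) * Nr ^ (m - b l0) := by
          apply mul_le_mul (hSbU _ h3) hprod_erase
            (Finset.prod_nonneg (fun l _ => hS0 _)) (by positivity)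
      _ = U * Nr ^ (m - 3) := by
          rw [mul_assoc, ← pow_add]
          congr 2
          omega
      _ ≤ Nr ^ (m - 3) * T := by
          rw [mul_comm]
          exact mul_le_mul_of_nonneg_left hUT (by positivity)
  · -- largest part ≤ 2
    have hb02 : b l0 = 2 := by
      rcases le_or_gt (b l0) 1 with h1 | h1
      · exfalso
        have : ∑ l, b l ≤ ∑ _l : Fin k, 1 := by
          apply Finset.sum_le_sum
          intro l _
          exact le_trans (hble l) h1
        simp at this
        omega
      · omega
    have hk2' : 2 ≤ k := by
      have : ∑ l, b l ≤ ∑ _l : Fin k, 2 := by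
        apply Finset.sum_le_sum
        intro l _
        exact le_trans (hble l) (le_of_eq hb02)
      simp at this
      omega
    set l1 : Fin k := ⟨1, by omega⟩ with hl1
    have hl10 : l1 ≠ l0 := by
      simp [hl1, hl0, Fin.ext_iff]
    have hb12 : b l1 = 2 := by
      rcases le_or_gt (b l1) 1 with h1 | h1
      · exfalso
        have hrest : ∀ l ∈ univ.erase l0, b l ≤ 1 := by
          intro l hl
          have hlne : l ≠ l0 := (Finset.mem_erase.1 hl).1
          have hlv : (l:ℕ) ≠ 0 := fun h => hlne (by rw [Fin.ext_iff]; exact h)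
          have : l1 ≤ l := by
            rw [Fin.le_def]
            show 1 ≤ (l:ℕ)
            omega
          exact le_trans (hsort l1 l this) h1
        have : ∑ l ∈ univ.erase l0, b l ≤ ∑ _l ∈ univ.erase l0, 1 :=
          Finset.sum_le_sum hrest
        rw [Finset.sum_const, smul_eq_mul, mul_one] at this
        rw [Finset.card_erase_of_mem (mem_univ l0), Finset.card_univ, Fintype.card_fin] at this
        omega
      · have := hble l1
        omega
    have hl1mem : l1 ∈ univ.erase l0 := Finset.mem_erase.2 ⟨hl10, mem_univ _⟩
    have hsplit1 : b l1 + ∑ l ∈ (univ.erase l0).erase l1, b l = ∑ l ∈ univ.erase l0, b l :=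
      Finset.add_sum_erase _ _ hl1mem
    have hm4 : 4 ≤ m := by
      have h := hsplit0
      have h' := hsplit1
      rw [hb02] at h
      rw [hb12] at h'
      omega
    have hprod_erase : ∏ l ∈ (univ.erase l0).erase l1, S (b l) ≤ Nr ^ (m - 4) := by
      calc ∏ l ∈ (univ.erase l0).erase l1, S (b l)
          ≤ ∏ l ∈ (univ.erase l0).erase l1, Nr ^ (b l) :=
            Finset.prod_le_prod (fun l _ => hS0 _) (fun l _ => hSb1 _ (hparts l))
        _ = Nr ^ (∑ l ∈ (univ.erase l0).erase l1, b l) := Finset.prod_pow_eq_pow_sum _ _ _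
        _ = Nr ^ (m - 4) := by congr 1; omega
    calc ∏ l, S (b l) = S (b l0) * ∏ l ∈ univ.erase l0, S (b l) :=
          (Finset.mul_prod_erase _ _ (mem_univ l0)).symm
      _ = S (b l0) * (S (b l1) * ∏ l ∈ (univ.erase l0).erase l1, S (b l)) := by
          rw [← Finset.mul_prod_erase _ _ hl1mem]
      _ = W * (W * ∏ l ∈ (univ.erase l0).erase l1, S (b l)) := by
          rw [hb02, hb12, hS2]
      _ ≤ W * (W * Nr ^ (m - 4)) := by
          have hW0 : 0 ≤ W := hS2 ▸ hS0 2
          apply mul_le_mul_of_nonneg_left (mul_le_mul_of_nonneg_left hprod_erase hW0) hW0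
      _ = (W * W) * Nr ^ (m - 4) := by ring
      _ ≤ (Nr * T) * Nr ^ (m - 4) := mul_le_mul_of_nonneg_right hWW (by positivity)
      _ = Nr ^ (m - 3) * T := by
          rw [show m - 3 = (m - 4) + 1 by omega, pow_succ]
          ring


lemma char_top (m k : ℕ) (hm : 2 ≤ m) (hk : k + 1 = m) (b : Fin k → ℕ)
    (hsort : ∀ l l' : Fin k, l ≤ l' → b l' ≤ b l)
    (hparts : ∀ l, 1 ≤ b l) (hbsum : ∑ l, b l = m) :
    ∀ l : Fin k, b l = if (l : ℕ) = 0 then 2 else 1 := by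
  have hk1 : 0 < k := by omega
  set l0 : Fin k := ⟨0, hk1⟩ with hl0
  have hble : ∀ l, b l ≤ b l0 := fun l => hsort l0 l (by rw [Fin.le_def]; exact Nat.zero_le _)
  have hsplit0 : b l0 + ∑ l ∈ univ.erase l0, b l = m := by
    rw [Finset.add_sum_erase _ _ (mem_univ l0)]; exact hbsum
  have hcard : (univ.erase l0).card = k - 1 := by
    rw [Finset.card_erase_of_mem (mem_univ l0), Finset.card_univ, Fintype.card_fin]
  have hlow : (univ.erase l0).card * 1 ≤ ∑ l ∈ univ.erase l0, b l := by
    have := Finset.card_nsmul_le_sum (univ.erase l0) b 1 (fun l _ => hparts l)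
    simpa using this
  have hub : b l0 ≤ 2 := by
    rw [hcard] at hlow
    omega
  have hlb : 2 ≤ b l0 := by
    by_contra h
    have hall : ∀ l, b l = 1 := by
      intro l
      have := hble l
      have := hparts l
      omega
    have : ∑ l, b l = k := by
      simp [hall]
    omega
  have hb02 : b l0 = 2 := le_antisymm hub hlb
  have hrest : ∀ l, l ≠ l0 → b l = 1 := by
    intro l' hl'
    by_contra h
    have hbl2 : 2 ≤ b l' := by have := hparts l'; omega
    have hl'mem : l' ∈ univ.erase l0 := Finset.mem_erase.2 ⟨hl', mem_univ _⟩
    have hsplit1 : b l' + ∑ l ∈ (univ.erase l0).erase l', b l = ∑ l ∈ univ.erase l0, b l :=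
      Finset.add_sum_erase _ _ hl'mem
    have hcard2 : ((univ.erase l0).erase l').card = k - 2 := by
      rw [Finset.card_erase_of_mem hl'mem, hcard]
      omega
    have hlow2 : ((univ.erase l0).erase l').card * 1 ≤ ∑ l ∈ (univ.erase l0).erase l', b l := by
      have := Finset.card_nsmul_le_sum ((univ.erase l0).erase l') b 1 (fun l _ => hparts l)
      simpa using this
    have hk2 : 2 ≤ k := by
      have : (l' : ℕ) < k := l'.isLt
      have : (l' : ℕ) ≠ 0 := fun h0 => hl' (by rw [Fin.ext_iff]; exact h0)
      omega
    rw [hcard2] at hlow2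
    omega
  intro l
  by_cases h : (l : ℕ) = 0
  · have hll0 : l = l0 := by rw [Fin.ext_iff]; exact h
    rw [if_pos h, hll0]
    exact hb02
  · rw [if_neg h]
    exact hrest l (fun he => h (by rw [he]))

lemma factor_denom_eval (m k : ℕ) (hm : 2 ≤ m) (hk : k + 1 = m) (c : Fin k → ℕ)
    (hc : ∀ l : Fin k, c l = if (l : ℕ) = 0 then 2 else 1) :
    ∏ j ∈ Finset.range (m+1),
      ((j.factorial : ℝ) ^ ((Finset.univ.filter (fun l : Fin k => c l = j)).card) *
        (((Finset.univ.filter (fun l : Fin k => c l = j)).card).factorial : ℝ)) =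
    2 * ((m-2).factorial : ℝ) := by
  have hk1 : 0 < k := by omega
  set l0 : Fin k := ⟨0, hk1⟩ with hl0
  have hf2 : Finset.univ.filter (fun l : Fin k => c l = 2) = {l0} := by
    ext l
    by_cases h : (l : ℕ) = 0
    · have he : l = l0 := by rw [Fin.ext_iff]; exact h
      simp [mem_filter, hc l, hc l0, h, he, hl0, hc ⟨0, hk1⟩]
    · have hne : l ≠ l0 := by rw [Ne, Fin.ext_iff]; exact h
      simp [mem_filter, hc l, h, hne]
  have hf1 : Finset.univ.filter (fun l : Fin k => c l = 1) = univ.erase l0 := by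
    ext l
    by_cases h : (l : ℕ) = 0
    · have he : l = l0 := by rw [Fin.ext_iff]; exact h
      simp [mem_filter, mem_erase, hc l, hc l0, h, he, hl0, hc ⟨0, hk1⟩]
    · have hne : l ≠ l0 := by rw [Ne, Fin.ext_iff]; exact h
      simp [mem_filter, mem_erase, hc l, h, hne]
  have hf0 : ∀ j, j ≠ 1 → j ≠ 2 → Finset.univ.filter (fun l : Fin k => c l = j) = ∅ := by
    intro j hj1 hj2
    apply Finset.filter_eq_empty_iff.2
    intro l _
    rw [hc l]
    by_cases h : (l : ℕ) = 0
    · simp only [if_pos h]; omega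
    · simp only [if_neg h]; omega
  set g : ℕ → ℝ := fun j =>
    ((j.factorial : ℝ) ^ ((Finset.univ.filter (fun l : Fin k => c l = j)).card) *
      (((Finset.univ.filter (fun l : Fin k => c l = j)).card).factorial : ℝ)) with hg
  have h1mem : 1 ∈ Finset.range (m+1) := by simp; omega
  have h2mem : 2 ∈ (Finset.range (m+1)).erase 1 := by
    simp [Finset.mem_erase]
    omega
  rw [← Finset.mul_prod_erase _ g h1mem, ← Finset.mul_prod_erase _ g h2mem]
  have hrest : ∏ j ∈ ((Finset.range (m+1)).erase 1).erase 2, g j = 1 := by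
    apply Finset.prod_eq_one
    intro j hj
    have hj2 : j ≠ 2 := (Finset.mem_erase.1 hj).1
    have hj1 : j ≠ 1 := (Finset.mem_erase.1 (Finset.mem_erase.1 hj).2).1
    rw [hg]
    simp only
    rw [hf0 j hj1 hj2]
    simp
  rw [hrest]
  have hcard1 : (Finset.univ.filter (fun l : Fin k => c l = 1)).card = m - 2 := by
    rw [hf1, Finset.card_erase_of_mem (mem_univ l0), Finset.card_univ, Fintype.card_fin]
    omega
  have hcard2 : (Finset.univ.filter (fun l : Fin k => c l = 2)).card = 1 := by
    rw [hf2, Finset.card_singleton]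
  rw [hg]
  simp only
  rw [hcard1, hcard2]
  simp [Nat.factorial_one, Nat.factorial_two]
  ring

lemma choose_two_eval (m : ℕ) (hm : 2 ≤ m) :
    (m.factorial : ℝ) / (2 * ((m-2).factorial : ℝ)) = (m.choose 2 : ℝ) := by
  have h := Nat.choose_mul_factorial_mul_factorial hm
  have h2 : (m.choose 2 : ℝ) * 2 * ((m-2).factorial : ℝ) = (m.factorial : ℝ) := by
    rw [show ((2:ℕ).factorial) = 2 from rfl] at h
    exact_mod_cast congrArg (Nat.cast : ℕ → ℝ) h
  have hpos : (0:ℝ) < 2 * ((m-2).factorial : ℝ) := by positivity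
  rw [div_eq_iff (ne_of_gt hpos)]
  linarith



set_option maxHeartbeats 1000000 in
lemma ff_nonneg (n c : ℕ) : 0 ≤ fallingFact (n : ℝ) c := by
  rw [ffCast]; positivity

set_option maxHeartbeats 2000000 in
/-- **Lemma 4 of the paper.** For every `m ≥ 2` there are constants
`B_m, C_m > 0` such that for every `N ≥ m` and offspring counts `ν` summing to `N`,
the total probability of a merger among `m` lineages (the sum over merger
configurations of the combinatorial factor times the sum over distinct index tuples of
products of falling factorials, normalized by `(N)_m`) is at most
`C(m,2)(1 + C_m/N) c_N + B_m (1 + C_m/N) D_N`. -/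
theorem merger_probability_bound (m : ℕ) (hm : 2 ≤ m) :
    ∃ B C : ℝ, 0 < B ∧ 0 < C ∧
      ∀ N : ℕ, m ≤ N → ∀ ν : Fin N → ℕ, ∑ i, ν i = N →
        (1 / fallingFact (N : ℝ) m) *
            ∑ k ∈ Finset.Icc 1 (m - 1),
              ∑ b ∈ Finset.univ.filter
                  (fun b : Fin k → Fin (m + 1) =>
                    (∀ l l' : Fin k, l ≤ l' → (b l' : ℕ) ≤ (b l : ℕ)) ∧
                    (∀ l, 1 ≤ (b l : ℕ)) ∧ ∑ l, (b l : ℕ) = m),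
                ((m.factorial : ℝ) /
                    ∏ j ∈ Finset.range (m + 1),
                      ((j.factorial : ℝ) ^
                          ((Finset.univ.filter (fun l : Fin k => (b l : ℕ) = j)).card) *
                        (((Finset.univ.filter
                            (fun l : Fin k => (b l : ℕ) = j)).card).factorial : ℝ))) *
                  ∑ i ∈ Finset.univ.filter
                      (fun i : Fin k → Fin N => Function.Injective i),
                    ∏ l, fallingFact (ν (i l) : ℝ) (b l : ℕ) ≤
          (m.choose 2 : ℝ) * (1 + C / (N : ℝ)) *
              ((1 / ((N : ℝ) * (N - 1))) * ∑ i, (ν i : ℝ) * ((ν i : ℝ) - 1)) +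
            B * (1 + C / (N : ℝ)) *
              ((1 / ((N : ℝ) ^ 2 * (N - 1))) * ∑ i, (ν i : ℝ) * ((ν i : ℝ) - 1) *
                ((ν i : ℝ) + (1 / (N : ℝ)) *
                  ∑ j ∈ Finset.univ.erase i, (ν j : ℝ) ^ 2)) := by
  classical
  refine ⟨((m:ℝ)+1)^(3*m) * (m.factorial : ℝ), (m:ℝ)^3 * ((m:ℝ)+1)^m,
    by positivity, by positivity, ?_⟩
  intro N hN ν hsum
  have hNm : (m:ℝ) ≤ (N:ℝ) := by exact_mod_cast hN
  have hm2 : (2:ℝ) ≤ (m:ℝ) := by exact_mod_cast hm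
  have hN2 : (2:ℝ) ≤ (N:ℝ) := le_trans hm2 hNm
  have hN0 : (0:ℝ) < N := by linarith
  have hN1 : (0:ℝ) < (N:ℝ) - 1 := by linarith
  have hνle : ∀ i, ν i ≤ N := fun i => by
    calc ν i ≤ ∑ j, ν j := Finset.single_le_sum (fun j _ => Nat.zero_le _) (mem_univ i)
      _ = N := hsum
  have hνler : ∀ i, (ν i : ℝ) ≤ (N:ℝ) := fun i => by exact_mod_cast hνle i
  set W := ∑ i, (ν i : ℝ) * ((ν i : ℝ) - 1) with hWdef
  set T := ∑ i, (ν i : ℝ) * ((ν i : ℝ) - 1) *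
      ((ν i : ℝ) + (1 / (N : ℝ)) * ∑ j ∈ Finset.univ.erase i, (ν j : ℝ) ^ 2) with hTdef
  set U := ∑ i, (ν i : ℝ) * ((ν i : ℝ) - 1) * (ν i : ℝ) with hUdef
  have hwi : ∀ i, (0:ℝ) ≤ (ν i : ℝ) * ((ν i : ℝ) - 1) := by
    intro i
    rcases Nat.eq_zero_or_pos (ν i) with h | h
    · simp [h]
    · have h1 : (1:ℝ) ≤ (ν i : ℝ) := by exact_mod_cast h
      nlinarith
  have hW0 : 0 ≤ W := Finset.sum_nonneg fun i _ => hwi i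
  have hU0 : 0 ≤ U := Finset.sum_nonneg fun i _ => mul_nonneg (hwi i) (Nat.cast_nonneg _)
  have hsq0 : ∀ i : Fin N, (0:ℝ) ≤ (1 / (N : ℝ)) * ∑ j ∈ Finset.univ.erase i, (ν j : ℝ) ^ 2 := by
    intro i; positivity
  have hT0 : 0 ≤ T := Finset.sum_nonneg fun i _ =>
    mul_nonneg (hwi i) (by have := hsq0 i; positivity)
  have hUT : U ≤ T := by
    rw [hUdef, hTdef]
    apply Finset.sum_le_sum
    intro i _
    have h1 := hsq0 i
    have h2 := hwi i
    nlinarith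
  have hS0 : ∀ c, 0 ≤ ∑ i, ((ν i).descFactorial c : ℝ) := fun c =>
    Finset.sum_nonneg fun i _ => Nat.cast_nonneg _
  have hdesc2 : ∀ n : ℕ, ((n.descFactorial 2 : ℕ) : ℝ) = (n:ℝ) * ((n:ℝ) - 1) := by
    intro n
    rcases n with _ | n
    · simp
    · rw [show (2:ℕ) = 1 + 1 from rfl, Nat.succ_descFactorial_succ, Nat.descFactorial_one]
      push_cast
      ring
  have hS2 : ∑ i, ((ν i).descFactorial 2 : ℝ) = W := by
    rw [hWdef]
    exact Finset.sum_congr rfl fun i _ => hdesc2 (ν i)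
  have hS1 : ∑ i, ((ν i).descFactorial 1 : ℝ) = (N:ℝ) := by
    simp only [Nat.descFactorial_one]
    rw [← Nat.cast_sum, hsum]
  have hSb1 : ∀ c, 1 ≤ c → ∑ i, ((ν i).descFactorial c : ℝ) ≤ (N:ℝ) ^ c := by
    intro c hc
    have hnat : ∑ i, (ν i).descFactorial c ≤ N ^ c := by
      calc ∑ i, (ν i).descFactorial c ≤ ∑ i, ν i * N ^ (c-1) :=
            Finset.sum_le_sum fun i _ => desc_le_mul_pow hc (hνle i)
        _ = N * N ^ (c-1) := by rw [← Finset.sum_mul, hsum]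
        _ = N ^ c := by rw [← pow_succ']; congr 1; omega
    calc ∑ i, ((ν i).descFactorial c : ℝ) = ((∑ i, (ν i).descFactorial c : ℕ) : ℝ) := by
          push_cast; rfl
      _ ≤ ((N ^ c : ℕ) : ℝ) := by exact_mod_cast hnat
      _ = (N:ℝ) ^ c := by push_cast; rfl
  have hcast_pair : ∀ i, ((ν i * (ν i - 1) : ℕ) : ℝ) ≤ (ν i : ℝ) * ((ν i : ℝ) - 1) := by
    intro i
    rcases Nat.eq_zero_or_pos (ν i) with h | h
    · simp [h]
    · rw [Nat.cast_mul, Nat.cast_sub h]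
      push_cast
      exact le_refl _
  have hSbW : ∀ c, 2 ≤ c → ∑ i, ((ν i).descFactorial c : ℝ) ≤ (N:ℝ) ^ (c-2) * W := by
    intro c hc
    calc ∑ i, ((ν i).descFactorial c : ℝ)
        ≤ ∑ i, ((ν i : ℝ) * ((ν i : ℝ) - 1)) * (N:ℝ) ^ (c-2) := by
          apply Finset.sum_le_sum
          intro i _
          have h1 : (ν i).descFactorial c ≤ ν i * (ν i - 1) * N ^ (c-2) :=
            desc_le_pair hc (hνle i)
          have h1' : ((ν i).descFactorial c : ℝ) ≤ ((ν i * (ν i - 1) : ℕ) : ℝ) * ((N:ℝ))^(c-2) := by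
            rw [show ((N:ℝ))^(c-2) = ((N ^ (c-2) : ℕ) : ℝ) by push_cast; rfl, ← Nat.cast_mul]
            exact_mod_cast h1
          exact h1'.trans (mul_le_mul_of_nonneg_right (hcast_pair i) (by positivity))
      _ = (N:ℝ) ^ (c-2) * W := by rw [hWdef, ← Finset.sum_mul]; ring
  have hSbU : ∀ c, 3 ≤ c → ∑ i, ((ν i).descFactorial c : ℝ) ≤ U * (N:ℝ) ^ (c-3) := by
    intro c hc
    calc ∑ i, ((ν i).descFactorial c : ℝ)
        ≤ ∑ i, ((ν i : ℝ) * ((ν i : ℝ) - 1) * (ν i : ℝ)) * (N:ℝ) ^ (c-3) := by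
          apply Finset.sum_le_sum
          intro i _
          have h1 : (ν i).descFactorial c ≤ ν i * (ν i - 1) * ν i * N ^ (c-3) :=
            desc_le_triple hc (hνle i)
          have h2 : ((ν i * (ν i - 1) * ν i : ℕ) : ℝ) ≤ (ν i : ℝ) * ((ν i : ℝ) - 1) * (ν i : ℝ) := by
            rw [Nat.cast_mul]
            exact mul_le_mul_of_nonneg_right (hcast_pair i) (Nat.cast_nonneg _)
          have h1' : ((ν i).descFactorial c : ℝ) ≤ ((ν i * (ν i - 1) * ν i : ℕ) : ℝ) * ((N:ℝ))^(c-3) := by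
            rw [show ((N:ℝ))^(c-3) = ((N ^ (c-3) : ℕ) : ℝ) by push_cast; rfl, ← Nat.cast_mul]
            exact_mod_cast h1
          exact h1'.trans (mul_le_mul_of_nonneg_right h2 (by positivity))
      _ = U * (N:ℝ) ^ (c-3) := by rw [hUdef, ← Finset.sum_mul]
  have hW2T : W * W ≤ (N:ℝ) * T := by
    have hsq : ∀ i : Fin N, W - (ν i : ℝ) * ((ν i : ℝ) - 1)
        ≤ ∑ j ∈ Finset.univ.erase i, (ν j : ℝ) ^ 2 := by
      intro i
      have h1 : ∀ j, (ν j : ℝ) * ((ν j : ℝ) - 1) ≤ (ν j : ℝ) ^ 2 := fun j => by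
        have h0 : (0:ℝ) ≤ (ν j : ℝ) := Nat.cast_nonneg _
        nlinarith
      calc W - (ν i : ℝ) * ((ν i : ℝ) - 1)
          = ∑ j ∈ Finset.univ.erase i, (ν j : ℝ) * ((ν j : ℝ) - 1) := by
            rw [hWdef, ← Finset.add_sum_erase _ _ (mem_univ i)]
            ring
        _ ≤ ∑ j ∈ Finset.univ.erase i, (ν j : ℝ) ^ 2 := Finset.sum_le_sum fun j _ => h1 j
    have h1 : ∀ i : Fin N, (1/(N:ℝ)) * ((ν i : ℝ) * ((ν i : ℝ) - 1) * (W - (ν i : ℝ) * ((ν i : ℝ) - 1)))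
        ≤ (ν i : ℝ) * ((ν i : ℝ) - 1) * ((1/(N:ℝ)) * ∑ j ∈ Finset.univ.erase i, (ν j : ℝ) ^ 2) := by
      intro i
      have hmm := mul_le_mul_of_nonneg_left (hsq i) (hwi i)
      have hh : (0:ℝ) ≤ 1/(N:ℝ) := by positivity
      nlinarith [mul_le_mul_of_nonneg_left hmm hh]
    have h2 : ∑ i, (1/(N:ℝ)) * ((ν i : ℝ) * ((ν i : ℝ) - 1) * (W - (ν i : ℝ) * ((ν i : ℝ) - 1)))
        ≤ T - U := by
      have hT' : T - U = ∑ i, (ν i : ℝ) * ((ν i : ℝ) - 1) *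
          ((1/(N:ℝ)) * ∑ j ∈ Finset.univ.erase i, (ν j : ℝ) ^ 2) := by
        rw [hTdef, hUdef, ← Finset.sum_sub_distrib]
        apply Finset.sum_congr rfl
        intro i _
        ring
      rw [hT']
      exact Finset.sum_le_sum fun i _ => h1 i
    have hWW' : W * W = ∑ i, ((ν i : ℝ) * ((ν i : ℝ) - 1)) * W := by
      rw [← Finset.sum_mul, ← hWdef]
    have h3 : ∑ i, (1/(N:ℝ)) * ((ν i : ℝ) * ((ν i : ℝ) - 1) * (W - (ν i : ℝ) * ((ν i : ℝ) - 1)))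
        = (1/(N:ℝ)) * (W * W - ∑ i, ((ν i : ℝ) * ((ν i : ℝ) - 1)) * ((ν i : ℝ) * ((ν i : ℝ) - 1))) := by
      calc ∑ i, (1/(N:ℝ)) * ((ν i : ℝ) * ((ν i : ℝ) - 1) * (W - (ν i : ℝ) * ((ν i : ℝ) - 1)))
          = (1/(N:ℝ)) * ∑ i, (((ν i : ℝ) * ((ν i : ℝ) - 1)) * W
              - ((ν i : ℝ) * ((ν i : ℝ) - 1)) * ((ν i : ℝ) * ((ν i : ℝ) - 1))) := by
            rw [Finset.mul_sum]
            exact Finset.sum_congr rfl fun i _ => by ring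
        _ = (1/(N:ℝ)) * (∑ i, ((ν i : ℝ) * ((ν i : ℝ) - 1)) * W
              - ∑ i, ((ν i : ℝ) * ((ν i : ℝ) - 1)) * ((ν i : ℝ) * ((ν i : ℝ) - 1))) := by
            rw [Finset.sum_sub_distrib]
        _ = _ := by rw [← hWW']
    have hSW2 : ∑ i, ((ν i : ℝ) * ((ν i : ℝ) - 1)) * ((ν i : ℝ) * ((ν i : ℝ) - 1))
        ≤ (N:ℝ) * U := by
      rw [hUdef, Finset.mul_sum]
      apply Finset.sum_le_sum
      intro i _
      have h0 : (0:ℝ) ≤ (ν i : ℝ) := Nat.cast_nonneg _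
      nlinarith [mul_nonneg (mul_nonneg (hwi i) h0)
        (by linarith [hνler i] : (0:ℝ) ≤ (N:ℝ) - ((ν i : ℝ) - 1))]
    rw [h3] at h2
    have h5 := mul_le_mul_of_nonneg_left h2 hN0.le
    rw [← mul_assoc, mul_one_div_cancel hN0.ne', one_mul] at h5
    nlinarith [h5, hSW2]
  -- ratio bounds
  obtain ⟨hP0, hR1, hR2⟩ := ratio_bounds hm hN
  set P := ∏ j ∈ Ico 2 m, ((N:ℝ) - (j:ℕ)) with hPdef
  have hA : fallingFact (N:ℝ) m = (N:ℝ) * ((N:ℝ) - 1) * P := by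
    rw [fallingFact, Finset.range_eq_Ico,
      Finset.prod_eq_prod_Ico_succ_bot (by omega : 0 < m),
      Finset.prod_eq_prod_Ico_succ_bot (by omega : 1 < m)]
    rw [hPdef]
    push_cast
    ring
  -- nonnegativity / bound for inner sums over injective tuples
  have hIle : ∀ (k : ℕ) (b : Fin k → Fin (m+1)),
      (∑ i ∈ Finset.univ.filter (fun i : Fin k → Fin N => Function.Injective i),
        ∏ l, fallingFact (ν (i l) : ℝ) (b l : ℕ))
      ≤ ∏ l, ∑ i, ((ν i).descFactorial (b l : ℕ) : ℝ) := by
    intro k b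
    have hstep1 : (∑ i ∈ Finset.univ.filter (fun i : Fin k → Fin N => Function.Injective i),
        ∏ l, fallingFact (ν (i l) : ℝ) (b l : ℕ))
        ≤ ∑ i : Fin k → Fin N, ∏ l, fallingFact (ν (i l) : ℝ) (b l : ℕ) :=
      Finset.sum_le_sum_of_subset_of_nonneg (Finset.filter_subset _ _)
        (fun i _ _ => Finset.prod_nonneg fun l _ => ff_nonneg _ _)
    refine hstep1.trans (le_of_eq ?_)
    calc ∑ i : Fin k → Fin N, ∏ l, fallingFact (ν (i l) : ℝ) (b l : ℕ)
        = ∑ i : Fin k → Fin N, ∏ l, ((ν (i l)).descFactorial (b l : ℕ) : ℝ) := by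
          simp only [ffCast]
      _ = ∏ l, ∑ i, ((ν i).descFactorial (b l : ℕ) : ℝ) := by
          rw [Finset.prod_univ_sum]
          rw [Fintype.piFinset_univ]
  have hI0 : ∀ (k : ℕ) (b : Fin k → Fin (m+1)),
      0 ≤ ∑ i ∈ Finset.univ.filter (fun i : Fin k → Fin N => Function.Injective i),
        ∏ l, fallingFact (ν (i l) : ℝ) (b l : ℕ) := by
    intro k b
    exact Finset.sum_nonneg fun i _ => Finset.prod_nonneg fun l _ => ff_nonneg _ _
  -- factor bounds
  have hden1 : ∀ (k : ℕ) (b : Fin k → Fin (m+1)), (1:ℝ) ≤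
      ∏ j ∈ Finset.range (m + 1),
        ((j.factorial : ℝ) ^ ((Finset.univ.filter (fun l : Fin k => (b l : ℕ) = j)).card) *
          (((Finset.univ.filter (fun l : Fin k => (b l : ℕ) = j)).card).factorial : ℝ)) := by
    intro k b
    apply one_le_prod_aux
    intro j _
    have h1 : (1:ℝ) ≤ (j.factorial : ℝ) := by exact_mod_cast j.factorial_pos
    have h2 : (1:ℝ) ≤ (((Finset.univ.filter (fun l : Fin k => (b l : ℕ) = j)).card).factorial : ℝ) := by
      exact_mod_cast Nat.factorial_pos _
    have h3 : (1:ℝ) ≤ (j.factorial : ℝ) ^ ((Finset.univ.filter (fun l : Fin k => (b l : ℕ) = j)).card) :=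
      one_le_pow₀ h1
    nlinarith
  have hfac_le : ∀ (k : ℕ) (b : Fin k → Fin (m+1)),
      ((m.factorial : ℝ) /
        ∏ j ∈ Finset.range (m + 1),
          ((j.factorial : ℝ) ^ ((Finset.univ.filter (fun l : Fin k => (b l : ℕ) = j)).card) *
            (((Finset.univ.filter (fun l : Fin k => (b l : ℕ) = j)).card).factorial : ℝ)))
      ≤ (m.factorial : ℝ) :=
    fun k b => div_le_self (by positivity) (hden1 k b)
  have hfac_0 : ∀ (k : ℕ) (b : Fin k → Fin (m+1)),
      0 ≤ ((m.factorial : ℝ) /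
        ∏ j ∈ Finset.range (m + 1),
          ((j.factorial : ℝ) ^ ((Finset.univ.filter (fun l : Fin k => (b l : ℕ) = j)).card) *
            (((Finset.univ.filter (fun l : Fin k => (b l : ℕ) = j)).card).factorial : ℝ))) :=
    fun k b => div_nonneg (by positivity) (by linarith [hden1 k b])
  -- middle term bounds
  have hmidterm : ∀ k, 1 ≤ k → k ≤ m - 2 → ∀ b : Fin k → Fin (m+1),
      ((∀ l l' : Fin k, l ≤ l' → (b l' : ℕ) ≤ (b l : ℕ)) ∧
        (∀ l, 1 ≤ (b l : ℕ)) ∧ ∑ l, (b l : ℕ) = m) →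
      (∑ i ∈ Finset.univ.filter (fun i : Fin k → Fin N => Function.Injective i),
        ∏ l, fallingFact (ν (i l) : ℝ) (b l : ℕ)) ≤ (N:ℝ)^(m-3) * T := by
    intro k hk1 hk2 b hb
    obtain ⟨hsort, hparts, hbsum⟩ := hb
    refine (hIle k b).trans ?_
    exact prod_bound_aux m k (N:ℝ) (fun c => ∑ i, ((ν i).descFactorial c : ℝ)) W U T
      (by linarith) hk1 hk2 hm hS0 hS2 hSb1 hSbU hUT hT0 hU0 hW2T
      (fun l => (b l : ℕ)) hsort hparts hbsum
  have hmid : ∑ k ∈ Finset.Icc 1 (m-2),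
      ∑ b ∈ Finset.univ.filter
          (fun b : Fin k → Fin (m + 1) =>
            (∀ l l' : Fin k, l ≤ l' → (b l' : ℕ) ≤ (b l : ℕ)) ∧
            (∀ l, 1 ≤ (b l : ℕ)) ∧ ∑ l, (b l : ℕ) = m),
        ((m.factorial : ℝ) /
            ∏ j ∈ Finset.range (m + 1),
              ((j.factorial : ℝ) ^
                  ((Finset.univ.filter (fun l : Fin k => (b l : ℕ) = j)).card) *
                (((Finset.univ.filter
                    (fun l : Fin k => (b l : ℕ) = j)).card).factorial : ℝ))) *
          ∑ i ∈ Finset.univ.filter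
              (fun i : Fin k → Fin N => Function.Injective i),
            ∏ l, fallingFact (ν (i l) : ℝ) (b l : ℕ)
      ≤ (m:ℝ) * (((m:ℝ)+1)^m * ((m.factorial:ℝ) * ((N:ℝ)^(m-3) * T))) := by
    have hX0 : (0:ℝ) ≤ (m.factorial:ℝ) * ((N:ℝ)^(m-3) * T) :=
      mul_nonneg (by positivity) (mul_nonneg (by positivity) hT0)
    refine le_trans (Finset.sum_le_card_nsmul _ _
      (((m:ℝ)+1)^m * ((m.factorial:ℝ) * ((N:ℝ)^(m-3) * T))) ?_) ?_
    · intro k hk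
      obtain ⟨hk1, hk2⟩ := Finset.mem_Icc.1 hk
      refine le_trans (Finset.sum_le_card_nsmul _ _
        ((m.factorial:ℝ) * ((N:ℝ)^(m-3) * T)) ?_) ?_
      · intro b hb
        exact mul_le_mul (hfac_le k b) (hmidterm k hk1 hk2 b (Finset.mem_filter.1 hb).2)
          (hI0 k b) (by positivity)
      · rw [nsmul_eq_mul]
        apply mul_le_mul_of_nonneg_right ?_ hX0
        have hc1 : (Finset.univ.filter
            (fun b : Fin k → Fin (m + 1) =>
              (∀ l l' : Fin k, l ≤ l' → (b l' : ℕ) ≤ (b l : ℕ)) ∧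
              (∀ l, 1 ≤ (b l : ℕ)) ∧ ∑ l, (b l : ℕ) = m)).card ≤ (m+1)^k := by
          refine le_trans (Finset.card_filter_le _ _) ?_
          rw [Finset.card_univ, Fintype.card_fun, Fintype.card_fin, Fintype.card_fin]
        have hkm : k ≤ m := le_trans hk2 (Nat.sub_le m 2)
        have hb1 : (1:ℝ) ≤ (m:ℝ)+1 := by linarith
        have h2 : (((m+1)^k : ℕ) : ℝ) ≤ ((m:ℝ)+1)^m := by
          push_cast
          exact pow_le_pow_right₀ hb1 hkm
        refine le_trans ?_ h2
        exact_mod_cast hc1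
    · rw [nsmul_eq_mul, Nat.card_Icc]
      apply mul_le_mul_of_nonneg_right ?_ (mul_nonneg (by positivity) hX0)
      have : ((m - 2 + 1 - 1 : ℕ) : ℝ) ≤ (m:ℝ) := by
        have : (m - 2 + 1 - 1 : ℕ) ≤ m := by omega
        exact_mod_cast this
      exact this
  -- top term bound (k = m - 2 + 1 = m - 1)
  have htop : (∑ b ∈ Finset.univ.filter
          (fun b : Fin (m - 2 + 1) → Fin (m + 1) =>
            (∀ l l' : Fin (m - 2 + 1), l ≤ l' → (b l' : ℕ) ≤ (b l : ℕ)) ∧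
            (∀ l, 1 ≤ (b l : ℕ)) ∧ ∑ l, (b l : ℕ) = m),
        ((m.factorial : ℝ) /
            ∏ j ∈ Finset.range (m + 1),
              ((j.factorial : ℝ) ^
                  ((Finset.univ.filter (fun l : Fin (m - 2 + 1) => (b l : ℕ) = j)).card) *
                (((Finset.univ.filter
                    (fun l : Fin (m - 2 + 1) => (b l : ℕ) = j)).card).factorial : ℝ))) *
          ∑ i ∈ Finset.univ.filter
              (fun i : Fin (m - 2 + 1) → Fin N => Function.Injective i),
            ∏ l, fallingFact (ν (i l) : ℝ) (b l : ℕ))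
      ≤ (m.choose 2 : ℝ) * (W * (N:ℝ)^(m-2)) := by
    rcases Finset.eq_empty_or_nonempty (Finset.univ.filter
          (fun b : Fin (m - 2 + 1) → Fin (m + 1) =>
            (∀ l l' : Fin (m - 2 + 1), l ≤ l' → (b l' : ℕ) ≤ (b l : ℕ)) ∧
            (∀ l, 1 ≤ (b l : ℕ)) ∧ ∑ l, (b l : ℕ) = m)) with hF | hF
    · rw [hF, Finset.sum_empty]
      exact mul_nonneg (Nat.cast_nonneg _) (mul_nonneg hW0 (by positivity))
    · obtain ⟨b0, hb0⟩ := hF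
      obtain ⟨hsort0, hparts0, hbsum0⟩ := (Finset.mem_filter.1 hb0).2
      have hchar0 := char_top m (m-2+1) hm (by omega) (fun l => (b0 l : ℕ)) hsort0 hparts0 hbsum0
      have hFs : (Finset.univ.filter
          (fun b : Fin (m - 2 + 1) → Fin (m + 1) =>
            (∀ l l' : Fin (m - 2 + 1), l ≤ l' → (b l' : ℕ) ≤ (b l : ℕ)) ∧
            (∀ l, 1 ≤ (b l : ℕ)) ∧ ∑ l, (b l : ℕ) = m)) = {b0} := by
        ext b
        simp only [Finset.mem_singleton]
        constructor
        · intro hb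
          obtain ⟨hsort, hparts, hbsum⟩ := (Finset.mem_filter.1 hb).2
          have hchar := char_top m (m-2+1) hm (by omega) (fun l => (b l : ℕ)) hsort hparts hbsum
          funext l
          exact Fin.ext ((hchar l).trans (hchar0 l).symm)
        · intro hb; rw [hb]; exact hb0
      rw [hFs, Finset.sum_singleton]
      have hfactor : ((m.factorial : ℝ) /
          ∏ j ∈ Finset.range (m + 1),
            ((j.factorial : ℝ) ^
                ((Finset.univ.filter (fun l : Fin (m - 2 + 1) => (b0 l : ℕ) = j)).card) *
              (((Finset.univ.filter
                  (fun l : Fin (m - 2 + 1) => (b0 l : ℕ) = j)).card).factorial : ℝ)))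
          = (m.choose 2 : ℝ) := by
        rw [factor_denom_eval m (m-2+1) hm (by omega) (fun l => (b0 l : ℕ)) hchar0]
        exact choose_two_eval m hm
      rw [hfactor]
      apply mul_le_mul_of_nonneg_left ?_ (Nat.cast_nonneg _)
      refine (hIle _ b0).trans ?_
      have hk1 : 0 < m - 2 + 1 := by omega
      rw [← Finset.mul_prod_erase _ _ (Finset.mem_univ (⟨0, hk1⟩ : Fin (m - 2 + 1)))]
      have hb0l0 : (b0 (⟨0, hk1⟩ : Fin (m - 2 + 1)) : ℕ) = 2 := by
        have := hchar0 ⟨0, hk1⟩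
        simpa using this
      have hrestprod : (∏ l ∈ Finset.univ.erase (⟨0, hk1⟩ : Fin (m - 2 + 1)),
          ∑ i, ((ν i).descFactorial (b0 l : ℕ) : ℝ)) = (N:ℝ)^(m-2) := by
        have hconst : ∀ l ∈ Finset.univ.erase (⟨0, hk1⟩ : Fin (m - 2 + 1)),
            (∑ i, ((ν i).descFactorial (b0 l : ℕ) : ℝ)) = (N:ℝ) := by
          intro l hl
          have hlne : l ≠ ⟨0, hk1⟩ := (Finset.mem_erase.1 hl).1
          have hlval : (l:ℕ) ≠ 0 := fun h => hlne (Fin.ext h)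
          have hb1 : (b0 l : ℕ) = 1 := by
            have := hchar0 l
            rwa [if_neg hlval] at this
          rw [hb1]
          exact hS1
        rw [Finset.prod_congr rfl hconst, Finset.prod_const,
          Finset.card_erase_of_mem (Finset.mem_univ _), Finset.card_univ, Fintype.card_fin,
          show m - 2 + 1 - 1 = m - 2 from by omega]
      rw [hb0l0, hS2, hrestprod]
  -- final assembly
  have hA0 : (0:ℝ) < (N:ℝ)*((N:ℝ)-1)*P := mul_pos (mul_pos hN0 hN1) hP0
  have honeA : (0:ℝ) ≤ 1/((N:ℝ)*((N:ℝ)-1)*P) := (one_div_pos.2 hA0).le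
  have hB0 : (0:ℝ) ≤ ((m:ℝ)+1)^(3*m) * (m.factorial:ℝ) := by positivity
  have hCN0 : (0:ℝ) ≤ (m:ℝ)^3*((m:ℝ)+1)^m/(N:ℝ) := by positivity
  rw [hA, show m - 1 = m - 2 + 1 by omega,
    Finset.sum_Icc_succ_top (by omega : 1 ≤ m - 2 + 1), mul_add]
  refine le_trans (add_le_add ?_ ?_) (le_of_eq (add_comm _ _))
  · -- middle part ≤ B term
    by_cases hm3 : 3 ≤ m
    · refine le_trans (mul_le_mul_of_nonneg_left hmid honeA) ?_
      have hmle : (m:ℝ) ≤ ((m:ℝ)+1)^m := by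
        calc (m:ℝ) ≤ (m:ℝ)+1 := by linarith
          _ = ((m:ℝ)+1)^1 := (pow_one _).symm
          _ ≤ ((m:ℝ)+1)^m := pow_le_pow_right₀ (by linarith) (by omega)
      have hexp : (N:ℝ)^(m-3) * (N:ℝ)^2 = (N:ℝ) * (N:ℝ)^(m-2) := by
        rw [← pow_add, show m-3+2 = (m-2)+1 by omega, pow_succ']
      have hcore : (m:ℝ) * (((m:ℝ)+1)^m * (m.factorial:ℝ)) * ((N:ℝ)^(m-3) * (N:ℝ)^2)
          ≤ (((m:ℝ)+1)^(3*m) * (m.factorial:ℝ)) * ((N:ℝ) * P) := by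
        rw [hexp, show 3*m = m + (m + m) by ring, pow_add, pow_add]
        have hnng : (0:ℝ) ≤ (N:ℝ)*(((m:ℝ)+1)^m * P) :=
          mul_nonneg hN0.le (mul_nonneg (by positivity) hP0.le)
        calc (m:ℝ) * (((m:ℝ)+1)^m * (m.factorial:ℝ)) * ((N:ℝ) * (N:ℝ)^(m-2))
            ≤ (m:ℝ) * (((m:ℝ)+1)^m * (m.factorial:ℝ)) * ((N:ℝ) * (((m:ℝ)+1)^m * P)) := by
              apply mul_le_mul_of_nonneg_left (mul_le_mul_of_nonneg_left hR2 hN0.le)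
                (by positivity)
          _ ≤ ((m:ℝ)+1)^m * (((m:ℝ)+1)^m * (m.factorial:ℝ)) * ((N:ℝ) * (((m:ℝ)+1)^m * P)) := by
              apply mul_le_mul_of_nonneg_right
                (mul_le_mul_of_nonneg_right hmle (by positivity)) hnng
          _ = ((m:ℝ)+1)^m * (((m:ℝ)+1)^m * ((m:ℝ)+1)^m) * (m.factorial:ℝ) * ((N:ℝ) * P) := by
              ring
      have hkey : (m:ℝ) * (((m:ℝ)+1)^m * ((m.factorial:ℝ) * ((N:ℝ)^(m-3) * T))) * ((N:ℝ)^2*((N:ℝ)-1))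
          ≤ (((m:ℝ)+1)^(3*m) * (m.factorial:ℝ)) * T * ((N:ℝ)*((N:ℝ)-1)*P) := by
        nlinarith [mul_le_mul_of_nonneg_right hcore (mul_nonneg hT0 hN1.le)]
      have hstep : (1/((N:ℝ)*((N:ℝ)-1)*P)) *
          ((m:ℝ) * (((m:ℝ)+1)^m * ((m.factorial:ℝ) * ((N:ℝ)^(m-3) * T))))
          ≤ (((m:ℝ)+1)^(3*m) * (m.factorial:ℝ)) * ((1/((N:ℝ)^2*((N:ℝ)-1)))*T) := by
        rw [one_div_mul_eq_div,
          show (((m:ℝ)+1)^(3*m) * (m.factorial:ℝ)) * ((1/((N:ℝ)^2*((N:ℝ)-1)))*T)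
            = ((((m:ℝ)+1)^(3*m) * (m.factorial:ℝ)) * T) / ((N:ℝ)^2*((N:ℝ)-1)) by ring,
          div_le_div_iff₀ hA0 (mul_pos (pow_pos hN0 2) hN1)]
        nlinarith [hkey]
      refine hstep.trans ?_
      have hx0 : (0:ℝ) ≤ (1/((N:ℝ)^2*((N:ℝ)-1)))*T :=
        mul_nonneg (by positivity) hT0
      nlinarith [mul_nonneg (mul_nonneg hB0 hCN0) hx0]
    · have hm2' : m - 2 = 0 := by omega
      rw [hm2', Finset.Icc_eq_empty (by omega), Finset.sum_empty, mul_zero]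
      have hx0 : (0:ℝ) ≤ (1/((N:ℝ)^2*((N:ℝ)-1)))*T :=
        mul_nonneg (by positivity) hT0
      have h1C : (0:ℝ) ≤ 1 + (m:ℝ)^3*((m:ℝ)+1)^m/(N:ℝ) := by linarith
      exact mul_nonneg (mul_nonneg hB0 h1C) hx0
  · -- top part ≤ choose term
    refine le_trans (mul_le_mul_of_nonneg_left htop honeA) ?_
    have h := mul_le_mul_of_nonneg_left hR1
      (mul_nonneg (Nat.cast_nonneg (m.choose 2)) hW0)
    calc (1/((N:ℝ)*((N:ℝ)-1)*P)) * ((m.choose 2 : ℝ) * (W * (N:ℝ)^(m-2)))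
        = ((m.choose 2 : ℝ) * (W * (N:ℝ)^(m-2))) / ((N:ℝ)*((N:ℝ)-1)*P) :=
          one_div_mul_eq_div _ _
      _ ≤ ((m.choose 2 : ℝ) * (1 + (m:ℝ)^3*((m:ℝ)+1)^m/(N:ℝ)) * W) / ((N:ℝ)*((N:ℝ)-1)) := by
          rw [div_le_div_iff₀ hA0 (mul_pos hN0 hN1)]
          nlinarith [mul_le_mul_of_nonneg_right h (mul_pos hN0 hN1).le]
      _ = (m.choose 2 : ℝ) * (1 + (m:ℝ)^3*((m:ℝ)+1)^m/(N:ℝ)) *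
          ((1/((N:ℝ)*((N:ℝ)-1))) * W) := by ring
end
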